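/- Let H be a quasi-Hopf algebra with bijective antipode, p_L = p̃¹⊗p̃² = X²S⁻¹(X¹β) ⊗ X³, f the Drinfel'd twist, and Ṽ := S(p̃²)f¹ ⊗ S(p̃¹)f² ∈ H⊗H. Then for all h ∈ H: (S(h) ⊗ 1)·Ṽ = (1 ⊗ h₁)·Ṽ·Δ(S(h₂)). -/

import Mathlib

open TensorProduct

noncomputable section

/-- A quasi-Hopf algebra structure (Drinfel'd) on a `k`-algebra `H`:
an algebra-map coproduct `comul`, an algebra-map counit, an invertible
associator `assoc ∈ H⊗H⊗H`, elements `α, β` and an anti-multiplicative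
antipode, satisfying (2.1)–(2.6) of the paper. -/
structure QuasiHopfAlgebra (k H : Type*) [CommRing k] [Ring H] [Algebra k H] where
  /-- the coproduct, an algebra map `H → H ⊗ H` -/
  comul : H →ₐ[k] H ⊗[k] H
  /-- the counit, an algebra map `H → k` -/
  counit : H →ₐ[k] k
  /-- the associator `Φ` -/
  assoc : H ⊗[k] (H ⊗[k] H)
  /-- the inverse `Φ⁻¹` of the associator -/
  assocInv : H ⊗[k] (H ⊗[k] H)
  /-- the antipode `S` -/
  antipode : H →ₗ[k] H
  /-- the element `α` -/
  alpha : H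
  /-- the element `β` -/
  beta : H
  antipode_one : antipode 1 = 1
  antipode_mul : ∀ a b : H, antipode (a * b) = antipode b * antipode a
  assoc_mul_inv : assoc * assocInv = 1
  inv_mul_assoc : assocInv * assoc = 1
  /-- (2.1): quasi-coassociativity `(id ⊗ Δ)Δ(h) = Φ ((Δ ⊗ id)Δ(h)) Φ⁻¹` -/
  quasi_coassoc : ∀ h : H,
    TensorProduct.map LinearMap.id comul.toLinearMap (comul h)
      = assoc * (TensorProduct.assoc k H H H)
          (TensorProduct.map comul.toLinearMap LinearMap.id (comul h)) * assocInv
  /-- (2.2): left counit axiom -/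
  counit_comul : ∀ h : H,
    (TensorProduct.lid k H) (TensorProduct.map counit.toLinearMap LinearMap.id (comul h)) = h
  /-- (2.2): right counit axiom -/
  comul_counit : ∀ h : H,
    (TensorProduct.rid k H) (TensorProduct.map LinearMap.id counit.toLinearMap (comul h)) = h
  /-- (2.3): the pentagon axiom
  `(1 ⊗ Φ)·((id ⊗ Δ ⊗ id)Φ)·(Φ ⊗ 1) = ((id ⊗ id ⊗ Δ)Φ)·((Δ ⊗ id ⊗ id)Φ)` -/
  pentagon :
    ((1 : H) ⊗ₜ[k] assoc)
      * (TensorProduct.map LinearMap.id (TensorProduct.assoc k H H H).toLinearMap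
          (TensorProduct.map LinearMap.id
            (TensorProduct.map comul.toLinearMap LinearMap.id) assoc))
      * (TensorProduct.map LinearMap.id (TensorProduct.assoc k H H H).toLinearMap
          ((TensorProduct.assoc k H (H ⊗[k] H) H) (assoc ⊗ₜ[k] (1 : H))))
    = (TensorProduct.map LinearMap.id
          (TensorProduct.map LinearMap.id comul.toLinearMap) assoc)
      * ((TensorProduct.assoc k H H (H ⊗[k] H))
          (TensorProduct.map comul.toLinearMap LinearMap.id assoc))
  /-- (2.4): `(id ⊗ ε ⊗ id)(Φ) = 1 ⊗ 1` -/
  counit_assoc :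
    TensorProduct.map LinearMap.id
      ((TensorProduct.lid k H).toLinearMap ∘ₗ
        TensorProduct.map counit.toLinearMap LinearMap.id) assoc = 1
  /-- (2.5): `Σ S(h₁) α h₂ = ε(h) α` -/
  antipode_left : ∀ h : H,
    LinearMap.mul' k H
      (TensorProduct.map (LinearMap.mulRight k alpha ∘ₗ antipode) LinearMap.id (comul h))
      = counit h • alpha
  /-- (2.5): `Σ h₁ β S(h₂) = ε(h) β` -/
  antipode_right : ∀ h : H,
    LinearMap.mul' k H
      (TensorProduct.map LinearMap.id (LinearMap.mulLeft k beta ∘ₗ antipode) (comul h))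
      = counit h • beta
  /-- (2.6): `X¹ β S(X²) α X³ = 1` -/
  assoc_antipode_left :
    LinearMap.mul' k H
      (TensorProduct.map LinearMap.id
        (LinearMap.mul' k H ∘ₗ
          TensorProduct.map
            (LinearMap.mulRight k alpha ∘ₗ LinearMap.mulLeft k beta ∘ₗ antipode)
            LinearMap.id)
        assoc) = 1
  /-- (2.6): `S(x¹) α x² β S(x³) = 1` -/
  assoc_antipode_right :
    LinearMap.mul' k H
      (TensorProduct.map antipode
        (LinearMap.mul' k H ∘ₗ
          TensorProduct.map
            (LinearMap.mulRight k beta ∘ₗ LinearMap.mulLeft k alpha)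
            antipode)
        assocInv) = 1

variable {k H : Type*} [CommRing k] [Ring H] [Algebra k H]

/-- `p_L = X²S⁻¹(X¹β) ⊗ X³`, built from the associator. -/
def pL (Q : QuasiHopfAlgebra k H) (Sinv : H →ₗ[k] H) : H ⊗[k] H :=
  TensorProduct.lift
    { toFun := fun x1 =>
        TensorProduct.map (LinearMap.mulRight k (Sinv (x1 * Q.beta))) LinearMap.id
      map_add' := fun x y => by
        have : LinearMap.mulRight k (Sinv ((x + y) * Q.beta))
            = LinearMap.mulRight k (Sinv (x * Q.beta))
              + LinearMap.mulRight k (Sinv (y * Q.beta)) := by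
          ext a; simp [add_mul, map_add, mul_add]
        rw [this, TensorProduct.map_add_left]
      map_smul' := fun c x => by
        have : LinearMap.mulRight k (Sinv ((c • x) * Q.beta))
            = c • LinearMap.mulRight k (Sinv (x * Q.beta)) := by
          ext a; simp [smul_mul_assoc, map_smul, mul_smul_comm]
        rw [this, TensorProduct.map_smul_left]
        rfl }
    Q.assoc

/-- `Ṽ = S(p̃²)f¹ ⊗ S(p̃¹)f² = (S ⊗ S)(swap p_L) · f`. -/
def Vel (Q : QuasiHopfAlgebra k H) (Sinv : H →ₗ[k] H) (f : H ⊗[k] H) : H ⊗[k] H :=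
  TensorProduct.map Q.antipode Q.antipode ((TensorProduct.comm k H H) (pL Q Sinv)) * f

/-- The right-hand side `Σ (1 ⊗ h₁) · Ṽ · Δ(S(h₂))` as a linear map in `h₁ ⊗ h₂`. -/
def rhs13 (Q : QuasiHopfAlgebra k H) (V : H ⊗[k] H) : H ⊗[k] H →ₗ[k] H ⊗[k] H :=
  TensorProduct.lift (LinearMap.mk₂ k
    (fun h1 h2 => ((1 : H) ⊗ₜ[k] h1) * V * Q.comul (Q.antipode h2))
    (fun h1 h1' h2 => by simp [TensorProduct.tmul_add, add_mul])
    (fun c h1 h2 => by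
      rw [show ((1 : H) ⊗ₜ[k] (c • h1)) = c • ((1 : H) ⊗ₜ[k] h1) from
        (TensorProduct.tmul_smul c 1 h1), smul_mul_assoc, smul_mul_assoc])
    (fun h1 h2 h2' => by simp [map_add, mul_add])
    (fun c h1 h2 => by simp [map_smul, mul_smul_comm]))

namespace Stmt13Aux

variable (Q : QuasiHopfAlgebra k H) (Sinv : H →ₗ[k] H)

/-- `D(u ⊗ v) = v * S⁻¹(u β)`. -/
def Dm : H ⊗[k] H →ₗ[k] H :=
  TensorProduct.lift (LinearMap.mk₂ k (fun u v => v * Sinv (u * Q.beta))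
    (fun u u' v => by simp [add_mul, mul_add])
    (fun c u v => by simp [smul_mul_assoc, mul_smul_comm])
    (fun u v v' => by simp [add_mul])
    (fun c u v => by simp [smul_mul_assoc]))

@[simp] lemma Dm_tmul (u v : H) : Dm Q Sinv (u ⊗ₜ[k] v) = v * Sinv (u * Q.beta) := by
  simp [Dm]

/-- `G(u ⊗ (v ⊗ w)) = v S⁻¹(u β) ⊗ w`. -/
def Gm : H ⊗[k] (H ⊗[k] H) →ₗ[k] H ⊗[k] H :=
  TensorProduct.map (Dm Q Sinv) LinearMap.id ∘ₗ (TensorProduct.assoc k H H H).symm.toLinearMap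

@[simp] lemma Gm_tmul (u v w : H) :
    Gm Q Sinv (u ⊗ₜ[k] (v ⊗ₜ[k] w)) = (v * Sinv (u * Q.beta)) ⊗ₜ[k] w := by
  simp [Gm]

/-- `E(p ⊗ q) : z ↦ q * z * (S⁻¹(p) ⊗ 1)`. -/
def Em : H ⊗[k] (H ⊗[k] H) →ₗ[k] (H ⊗[k] H) →ₗ[k] (H ⊗[k] H) :=
  TensorProduct.lift (LinearMap.mk₂ k
    (fun p q => LinearMap.mulLeft k q ∘ₗ LinearMap.mulRight k (Sinv p ⊗ₜ[k] (1 : H)))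
    (fun p p' q => LinearMap.ext fun z => by
      simp [map_add, TensorProduct.add_tmul, mul_add])
    (fun c p q => LinearMap.ext fun z => by
      simp [map_smul, ← TensorProduct.smul_tmul', mul_smul_comm])
    (fun p q q' => LinearMap.ext fun z => by simp [add_mul])
    (fun c p q => LinearMap.ext fun z => by simp [smul_mul_assoc]))

@[simp] lemma Em_tmul (p : H) (q z : H ⊗[k] H) :
    Em Sinv (p ⊗ₜ[k] q) z = q * (z * (Sinv p ⊗ₜ[k] (1 : H))) := by
  simp [Em]

/-- `F = (S ⊗ S) ∘ swap`. -/
def Fm : H ⊗[k] H →ₗ[k] H ⊗[k] H :=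
  TensorProduct.map Q.antipode Q.antipode ∘ₗ (TensorProduct.comm k H H).toLinearMap

@[simp] lemma Fm_tmul (a b : H) :
    Fm Q (a ⊗ₜ[k] b) = Q.antipode b ⊗ₜ[k] Q.antipode a := by
  simp [Fm]

lemma Sinv_mul (hS1 : ∀ a : H, Sinv (Q.antipode a) = a) (hS2 : ∀ a : H, Q.antipode (Sinv a) = a) (a b : H) : Sinv (a * b) = Sinv b * Sinv a := by
  have h : a * b = Q.antipode (Sinv b * Sinv a) := by rw [Q.antipode_mul, hS2, hS2]
  rw [h, hS1]

/-- `F` is anti-multiplicative. -/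
lemma Fm_anti (x y : H ⊗[k] H) : Fm Q (x * y) = Fm Q y * Fm Q x := by
  induction x using TensorProduct.induction_on with
  | zero => simp
  | add x1 x2 h1 h2 => simp [add_mul, mul_add, h1, h2]
  | tmul a b =>
    induction y using TensorProduct.induction_on with
    | zero => simp
    | add y1 y2 h1 h2 => simp [add_mul, mul_add, h1, h2]
    | tmul c d => simp [Algebra.TensorProduct.tmul_mul_tmul, Q.antipode_mul]

/-- `p_L` expressed through `E`. -/
lemma pL_eq (hS1 : ∀ a : H, Sinv (Q.antipode a) = a) (hS2 : ∀ a : H, Q.antipode (Sinv a) = a) : pL Q Sinv = Em Sinv Q.assoc (Sinv Q.beta ⊗ₜ[k] (1 : H)) := by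
  unfold pL
  generalize Q.assoc = t
  induction t using TensorProduct.induction_on with
  | zero => simp
  | add t1 t2 h1 h2 => simp only [map_add, LinearMap.add_apply, h1, h2]
  | tmul p q =>
    induction q using TensorProduct.induction_on with
    | zero => simp
    | add q1 q2 h1 h2 =>
      simp only [TensorProduct.tmul_add, map_add, LinearMap.add_apply, add_mul] at h1 h2 ⊢
      rw [h1, h2]
    | tmul v w =>
      simp [Algebra.TensorProduct.tmul_mul_tmul, Sinv_mul Q Sinv hS1 hS2, mul_assoc]

/-- Lemma B : `Σ h₂ S⁻¹(h₁ β) = ε(h) S⁻¹(β)`. -/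
lemma Dm_comul (hS1 : ∀ a : H, Sinv (Q.antipode a) = a) (hS2 : ∀ a : H, Q.antipode (Sinv a) = a) (x : H) : Dm Q Sinv (Q.comul x) = Q.counit x • Sinv Q.beta := by
  have key : ∀ z : H ⊗[k] H, Q.antipode (Dm Q Sinv z)
      = LinearMap.mul' k H (TensorProduct.map LinearMap.id
          (LinearMap.mulLeft k Q.beta ∘ₗ Q.antipode) z) := by
    intro z
    induction z using TensorProduct.induction_on with
    | zero => simp
    | add a b ha hb => simp [map_add, ha, hb]
    | tmul u v => simp [Q.antipode_mul, hS2, mul_assoc]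
  rw [← hS1 (Dm Q Sinv (Q.comul x)), key, Q.antipode_right x, map_smul]

lemma mapD_comul (hS1 : ∀ a : H, Sinv (Q.antipode a) = a) (hS2 : ∀ a : H, Q.antipode (Sinv a) = a) (z : H ⊗[k] H) :
    TensorProduct.map (Dm Q Sinv) LinearMap.id
        (TensorProduct.map Q.comul.toLinearMap LinearMap.id z)
      = Sinv Q.beta ⊗ₜ[k]
          ((TensorProduct.lid k H)
            (TensorProduct.map Q.counit.toLinearMap LinearMap.id z)) := by
  induction z using TensorProduct.induction_on with
  | zero => simp
  | add a b ha hb => simp [map_add, ha, hb, TensorProduct.tmul_add]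
  | tmul a b =>
    simp [Dm_comul Q Sinv hS1 hS2, TensorProduct.smul_tmul', TensorProduct.tmul_smul,
      Algebra.TensorProduct.tmul_mul_tmul]

/-- C1' : `G((a ⊗ z)·t) = z · (E t (S⁻¹(β) ⊗ 1)) · (S⁻¹(a) ⊗ 1)`. -/
lemma Gm_mul_left (hS1 : ∀ a : H, Sinv (Q.antipode a) = a) (hS2 : ∀ a : H, Q.antipode (Sinv a) = a) (a : H) (z : H ⊗[k] H) (t : H ⊗[k] (H ⊗[k] H)) :
    Gm Q Sinv ((a ⊗ₜ[k] z) * t)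
      = z * Em Sinv t (Sinv Q.beta ⊗ₜ[k] (1 : H)) * (Sinv a ⊗ₜ[k] (1 : H)) := by
  induction t using TensorProduct.induction_on with
  | zero => simp
  | add t1 t2 h1 h2 => simp [mul_add, add_mul, h1, h2]
  | tmul p q =>
    induction q using TensorProduct.induction_on with
    | zero => simp
    | add q1 q2 h1 h2 =>
      simp only [TensorProduct.tmul_add, mul_add, add_mul, map_add, LinearMap.add_apply] at h1 h2 ⊢
      rw [h1, h2]
    | tmul v w =>
      induction z using TensorProduct.induction_on with
      | zero => simp
      | add z1 z2 h1 h2 =>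
        simp only [TensorProduct.tmul_add, mul_add, add_mul, map_add] at h1 h2 ⊢
        rw [h1, h2]
      | tmul c d =>
        simp [Algebra.TensorProduct.tmul_mul_tmul, Sinv_mul Q Sinv hS1 hS2, mul_assoc]

/-- C2a' : `G(t · assoc(y)) = E t ((D ⊗ id) y)`. -/
lemma Gm_mul_assoc (hS1 : ∀ a : H, Sinv (Q.antipode a) = a) (hS2 : ∀ a : H, Q.antipode (Sinv a) = a) (t : H ⊗[k] (H ⊗[k] H)) (y : (H ⊗[k] H) ⊗[k] H) :
    Gm Q Sinv (t * (TensorProduct.assoc k H H H) y)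
      = Em Sinv t (TensorProduct.map (Dm Q Sinv) LinearMap.id y) := by
  induction y using TensorProduct.induction_on with
  | zero => simp
  | add y1 y2 h1 h2 => simp [map_add, mul_add, h1, h2]
  | tmul z w =>
    induction z using TensorProduct.induction_on with
    | zero => simp
    | add z1 z2 h1 h2 =>
      simp only [TensorProduct.add_tmul, map_add, mul_add, LinearMap.map_add] at h1 h2 ⊢
      rw [h1, h2]
    | tmul u c =>
      induction t using TensorProduct.induction_on with
      | zero => simp
      | add t1 t2 h1 h2 =>
        simp only [TensorProduct.assoc_tmul] at h1 h2 ⊢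
        simp [add_mul, map_add, LinearMap.add_apply, h1, h2]
      | tmul p q =>
        induction q using TensorProduct.induction_on with
        | zero => simp
        | add q1 q2 h1 h2 =>
          simp only [TensorProduct.tmul_add, mul_add, add_mul, map_add,
            LinearMap.add_apply] at h1 h2 ⊢
          rw [h1, h2]
        | tmul v w' =>
          simp [Algebra.TensorProduct.tmul_mul_tmul, TensorProduct.assoc_tmul,
            Sinv_mul Q Sinv hS1 hS2, mul_assoc]

/-- C2c' : `E t` commutes with right multiplication by `1 ⊗ h`. -/
lemma Em_mul_right (t : H ⊗[k] (H ⊗[k] H)) (z : H ⊗[k] H) (h : H) :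
    Em Sinv t (z * ((1 : H) ⊗ₜ[k] h)) = Em Sinv t z * ((1 : H) ⊗ₜ[k] h) := by
  induction t using TensorProduct.induction_on with
  | zero => simp
  | add t1 t2 h1 h2 => simp [map_add, add_mul, h1, h2]
  | tmul p q =>
    have comm : ((1 : H) ⊗ₜ[k] h) * (Sinv p ⊗ₜ[k] (1 : H))
        = (Sinv p ⊗ₜ[k] (1 : H)) * ((1 : H) ⊗ₜ[k] h) := by
      simp [Algebra.TensorProduct.tmul_mul_tmul]
    simp only [Em_tmul, mul_assoc]
    rw [comm]

/-- quasi-coassociativity, rearranged. -/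
lemma qca (h : H) :
    TensorProduct.map LinearMap.id Q.comul.toLinearMap (Q.comul h) * Q.assoc
      = Q.assoc * (TensorProduct.assoc k H H H)
          (TensorProduct.map Q.comul.toLinearMap LinearMap.id (Q.comul h)) := by
  rw [Q.quasi_coassoc h,
    mul_assoc (Q.assoc * (TensorProduct.assoc k H H H)
      (TensorProduct.map Q.comul.toLinearMap LinearMap.id (Q.comul h))) Q.assocInv Q.assoc,
    Q.inv_mul_assoc, mul_one]

/-- Lemma A : `Σ Δ(h₂) p_L (S⁻¹(h₁) ⊗ 1) = p_L (1 ⊗ h)` in the `G`-formulation. -/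
lemma lemA (hS1 : ∀ a : H, Sinv (Q.antipode a) = a) (hS2 : ∀ a : H, Q.antipode (Sinv a) = a) (h : H) :
    Gm Q Sinv (TensorProduct.map LinearMap.id Q.comul.toLinearMap (Q.comul h) * Q.assoc)
      = pL Q Sinv * ((1 : H) ⊗ₜ[k] h) := by
  rw [qca, Gm_mul_assoc Q Sinv hS1 hS2, mapD_comul Q Sinv hS1 hS2, Q.counit_comul h]
  have : Sinv Q.beta ⊗ₜ[k] h = (Sinv Q.beta ⊗ₜ[k] (1 : H)) * ((1 : H) ⊗ₜ[k] h) := by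
    simp [Algebra.TensorProduct.tmul_mul_tmul]
  rw [this, Em_mul_right, ← pL_eq Q Sinv hS1 hS2]

end Stmt13Aux

/-- for a quasi-Hopf algebra `H` with bijective antipode and
Drinfel'd twist `f`, the element `Ṽ = S(p̃²)f¹ ⊗ S(p̃¹)f²` satisfies
`(S(h) ⊗ 1)·Ṽ = (1 ⊗ h₁)·Ṽ·Δ(S(h₂))` for all `h ∈ H`. -/
theorem stmt_13 (Q : QuasiHopfAlgebra k H) (Sinv : H →ₗ[k] H)
    (hS1 : ∀ a : H, Sinv (Q.antipode a) = a)
    (hS2 : ∀ a : H, Q.antipode (Sinv a) = a)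
    (f g : H ⊗[k] H) (hfg : f * g = 1) (hgf : g * f = 1)
    (htwist : ∀ h : H,
      f * Q.comul (Q.antipode h) * g
        = TensorProduct.map Q.antipode Q.antipode
            ((TensorProduct.comm k H H) (Q.comul h))) :
    ∀ h : H,
      (Q.antipode h ⊗ₜ[k] (1 : H)) * Vel Q Sinv f
        = rhs13 Q (Vel Q Sinv f) (Q.comul h) := by
  open Stmt13Aux in
  have hVel : Vel Q Sinv f = Fm Q (pL Q Sinv) * f := rfl
  have hFm_def : ∀ z : H ⊗[k] H,
      Fm Q z = TensorProduct.map Q.antipode Q.antipode ((TensorProduct.comm k H H) z) :=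
    fun z => rfl
  -- the right-hand side, pulled back through `F` and the twist
  have lemC : ∀ x : H ⊗[k] H,
      Fm Q (Gm Q Sinv (TensorProduct.map LinearMap.id Q.comul.toLinearMap x * Q.assoc)) * f
        = rhs13 Q (Vel Q Sinv f) x := by
    intro x
    induction x using TensorProduct.induction_on with
    | zero => simp
    | add x1 x2 h1 h2 => simp [add_mul, map_add, h1, h2]
    | tmul a b =>
      have hx : TensorProduct.map LinearMap.id Q.comul.toLinearMap (a ⊗ₜ[k] b)
          = a ⊗ₜ[k] (Q.comul b) := by simp
      rw [hx, Gm_mul_left Q Sinv hS1 hS2, ← pL_eq Q Sinv hS1 hS2,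
        Fm_anti Q, Fm_anti Q]
      have h1 : Fm Q (Sinv a ⊗ₜ[k] (1 : H)) = (1 : H) ⊗ₜ[k] a := by
        simp [Q.antipode_one, hS2]
      have h2 : Fm Q (Q.comul b) * f = f * Q.comul (Q.antipode b) := by
        rw [hFm_def, ← htwist b, mul_assoc, hgf, mul_one]
      have h3 : rhs13 Q (Vel Q Sinv f) (a ⊗ₜ[k] b)
          = ((1 : H) ⊗ₜ[k] a) * Vel Q Sinv f * Q.comul (Q.antipode b) := by
        simp [rhs13]
      rw [h1, h3, hVel]
      have h4 : (Fm Q (pL Q Sinv) * Fm Q (Q.comul b)) * f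
          = (Fm Q (pL Q Sinv) * f) * Q.comul (Q.antipode b) := by
        rw [mul_assoc, h2, mul_assoc]
      rw [mul_assoc ((1:H) ⊗ₜ[k] a) (Fm Q (pL Q Sinv) * Fm Q (Q.comul b)) f, h4,
        ← mul_assoc]
  intro h
  have hmain := lemC (Q.comul h)
  rw [lemA Q Sinv hS1 hS2 h, Fm_anti Q] at hmain
  have hF : Fm Q ((1 : H) ⊗ₜ[k] h) = Q.antipode h ⊗ₜ[k] (1 : H) := by
    simp [Q.antipode_one]
  rw [hF, mul_assoc, ← hVel] at hmain
  exact hmain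

end
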